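/- Let y_0 ∈ ℝ^{d-r} satisfy (R₂^T)^m y_0 ≡ y_0 (mod ℤ^{d-r}) for some integer m ≥ 1, where R₂ is an expansive (d-r)×(d-r) integer matrix, and suppose y_j := (R₂^T)^j y_0 ∉ ℤ^{d-r} for 1 ≤ j ≤ m. Then Γ := {x ∈ ℤ^{d-r} : ⟨x, (R₂^T)^{-1} y_j⟩ ∈ ℤ for all 1 ≤ j ≤ m} is a full-rank proper sublattice of ℤ^{d-r}, it satisfies R₂(Γ) ⊆ Γ, and hence Γ = Q(ℤ^{d-r}) for an integer matrix Q with |det Q| ≥ 2 such that R₂ Q = Q R̃₂ for some integer matrix R̃₂. -/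

import Mathlib

open scoped BigOperators
open Matrix

noncomputable section

/-- Cast of an integer matrix to a real matrix. -/
def mR {e : ℕ} (R : Matrix (Fin e) (Fin e) ℤ) : Matrix (Fin e) (Fin e) ℝ :=
  R.map (Int.cast : ℤ → ℝ)

/-- Cast of an integer vector to a real vector. -/
def vR {e : ℕ} (b : Fin e → ℤ) : Fin e → ℝ := fun i => (b i : ℝ)

/-- The standard inner product on ℝ^e. -/
def ip {e : ℕ} (x y : Fin e → ℝ) : ℝ := ∑ i, x i * y i

/-- A matrix is expansive if all of its complex eigenvalues have modulus > 1. -/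
def Expansive {e : ℕ} (R : Matrix (Fin e) (Fin e) ℤ) : Prop :=
  ∀ z ∈ spectrum ℂ (R.map (Int.cast : ℤ → ℂ)), 1 < ‖z‖

/-- Γ = {x ∈ ℤ^e : ⟨x, (R₂ᵀ)⁻¹ y_j⟩ ∈ ℤ for 1 ≤ j ≤ m}, where y_j = (R₂ᵀ)^j y₀. -/
def Gamma {e : ℕ} (R2 : Matrix (Fin e) (Fin e) ℤ) (y0 : Fin e → ℝ) (m : ℕ) :
    Set (Fin e → ℤ) :=
  {x | ∀ j : ℕ, 1 ≤ j → j ≤ m →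
    ∃ z : ℤ, ip (vR x) (((mR R2)ᵀ)⁻¹.mulVec (((mR R2)ᵀ ^ j).mulVec y0)) = (z : ℝ)}

namespace GammaAux

variable {e : ℕ}

lemma mR_eq (R : Matrix (Fin e) (Fin e) ℤ) : mR R = (Int.castRingHom ℝ).mapMatrix R := rfl

lemma mR_pow (R : Matrix (Fin e) (Fin e) ℤ) (n : ℕ) : mR (R ^ n) = mR R ^ n := by
  rw [mR_eq, mR_eq, map_pow]

lemma mR_transpose (R : Matrix (Fin e) (Fin e) ℤ) : (mR R)ᵀ = mR Rᵀ := rfl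

lemma mR_mulVec_vR (P : Matrix (Fin e) (Fin e) ℤ) (u : Fin e → ℤ) :
    (mR P).mulVec (vR u) = vR (P.mulVec u) := by
  funext i
  simp only [mR, vR, Matrix.mulVec, dotProduct, Matrix.map_apply]
  push_cast
  rfl

lemma ip_vR_vR (x u : Fin e → ℤ) : ip (vR x) (vR u) = ((∑ i, x i * u i : ℤ) : ℝ) := by
  simp only [ip, vR]
  push_cast
  rfl

lemma ip_add_right (x u v : Fin e → ℝ) : ip x (u + v) = ip x u + ip x v := by
  simp [ip, mul_add, Finset.sum_add_distrib]

lemma ip_vR_add_left (a b : Fin e → ℤ) (v : Fin e → ℝ) :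
    ip (vR (a + b)) v = ip (vR a) v + ip (vR b) v := by
  simp [ip, vR, add_mul, Finset.sum_add_distrib]

lemma ip_vR_zero_left (v : Fin e → ℝ) : ip (vR (0 : Fin e → ℤ)) v = 0 := by
  simp [ip, vR]

lemma ip_vR_zsmul_left (n : ℤ) (a : Fin e → ℤ) (v : Fin e → ℝ) :
    ip (vR (n • a)) v = (n : ℝ) * ip (vR a) v := by
  simp only [ip, vR, Pi.smul_apply, smul_eq_mul, Finset.mul_sum]
  apply Finset.sum_congr rfl
  intro i _
  push_cast
  ring

lemma ip_mulVec_left (M : Matrix (Fin e) (Fin e) ℝ) (u v : Fin e → ℝ) :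
    ip (M.mulVec u) v = ip u (Mᵀ.mulVec v) := by
  show (M *ᵥ u) ⬝ᵥ v = u ⬝ᵥ (Mᵀ *ᵥ v)
  rw [Matrix.dotProduct_mulVec, Matrix.vecMul_transpose]

end GammaAux

open GammaAux

/-- structure of the lattice Γ. -/
theorem gamma_lattice_structure {e : ℕ} (R2 : Matrix (Fin e) (Fin e) ℤ)
    (hR2 : Expansive R2) (y0 : Fin e → ℝ) (m : ℕ) (hm : 1 ≤ m)
    (hper : ∃ k : Fin e → ℤ, ((mR R2)ᵀ ^ m).mulVec y0 = y0 + vR k)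
    (hnint : ∀ j : ℕ, 1 ≤ j → j ≤ m →
      ¬ ∃ k : Fin e → ℤ, ((mR R2)ᵀ ^ j).mulVec y0 = vR k) :
    (∃ c : ℤ, c ≠ 0 ∧ ∀ x : Fin e → ℤ, c • x ∈ Gamma R2 y0 m) ∧
    Gamma R2 y0 m ≠ Set.univ ∧
    (∀ x ∈ Gamma R2 y0 m, R2.mulVec x ∈ Gamma R2 y0 m) ∧
    ∃ Q : Matrix (Fin e) (Fin e) ℤ,
      Gamma R2 y0 m = {y | ∃ k : Fin e → ℤ, y = Q.mulVec k} ∧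
      2 ≤ |Q.det| ∧
      ∃ Rt : Matrix (Fin e) (Fin e) ℤ, R2 * Q = Q * Rt := by
  classical
  obtain ⟨k0, hk0⟩ := hper
  set A : Matrix (Fin e) (Fin e) ℝ := (mR R2)ᵀ with hA
  set Mm : Matrix (Fin e) (Fin e) ℤ := R2ᵀ ^ m - 1 with hMm
  set B : Matrix (Fin e) (Fin e) ℂ := R2.map (Int.cast : ℤ → ℂ) with hB
  -- R2 has nonzero determinant
  have hdet : R2.det ≠ 0 := by
    intro h
    have hBdet : B.det = ((R2.det : ℤ) : ℂ) := ((Int.castRingHom ℂ).map_det R2).symm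
    have h0 : (0 : ℂ) ∈ spectrum ℂ B := by
      rw [spectrum.zero_mem_iff, Matrix.isUnit_iff_isUnit_det, hBdet, h]
      simp
    have h1 := hR2 0 h0
    rw [norm_zero] at h1
    norm_num at h1
  -- A is invertible
  have hAdet : IsUnit A.det := by
    have hAd : A.det = ((R2.det : ℤ) : ℝ) := by
      rw [hA, Matrix.det_transpose, mR_eq, ← RingHom.map_det]
      simp
    rw [hAd, isUnit_iff_ne_zero]
    exact_mod_cast hdet
  -- the determinant of (R2ᵀ)^m - 1 is nonzero
  have hc : Mm.det ≠ 0 := by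
    intro h
    have h1 : (1 : ℂ) ∈ spectrum ℂ (Bᵀ ^ m) := by
      rw [spectrum.mem_iff]
      intro hu
      have hu' : IsUnit (Bᵀ ^ m - 1) := by
        have := hu.neg
        simpa [neg_sub] using this
      rw [Matrix.isUnit_iff_isUnit_det] at hu'
      have hcast : Bᵀ ^ m - 1 = (Int.castRingHom ℂ).mapMatrix Mm := by
        rw [hMm]
        simp only [_root_.map_sub, _root_.map_pow, _root_.map_one]
        rfl
      have hdet2 : (Bᵀ ^ m - 1).det = ((Mm.det : ℤ) : ℂ) := by
        rw [hcast, ← RingHom.map_det]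
        simp
      rw [hdet2, h] at hu'
      simpa using hu'
    rw [spectrum.map_pow_of_pos _ (by omega : 0 < m)] at h1
    obtain ⟨z, hz, hzm⟩ := h1
    have hz' : z ∈ spectrum ℂ B := by
      rw [spectrum.mem_iff] at hz ⊢
      intro hu
      apply hz
      have htr : algebraMap ℂ (Matrix (Fin e) (Fin e) ℂ) z - Bᵀ
          = (algebraMap ℂ (Matrix (Fin e) (Fin e) ℂ) z - B)ᵀ := by
        simp [Algebra.algebraMap_eq_smul_one, Matrix.transpose_sub,
          Matrix.transpose_smul, Matrix.transpose_one]
      rw [Matrix.isUnit_iff_isUnit_det] at hu ⊢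
      rwa [htr, Matrix.det_transpose]
    have habs := hR2 z hz'
    have hzm' : z ^ m = 1 := hzm
    have h2 : ‖z‖ ^ m = 1 := by
      rw [← norm_pow, hzm', norm_one]
    have h3 : 1 < ‖z‖ ^ m := one_lt_pow₀ habs (by omega)
    rw [h2] at h3
    exact lt_irrefl _ h3
  -- rationality: Mm.det • (A^i y0) is an integer vector
  have hMmR : mR Mm = A ^ m - 1 := by
    rw [hMm, mR_eq, _root_.map_sub, _root_.map_pow, _root_.map_one, hA]
    rfl
  have hMy : (mR Mm).mulVec y0 = vR k0 := by
    rw [hMmR, Matrix.sub_mulVec, Matrix.one_mulVec, hk0, add_sub_cancel_left]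
  have hcy : ((Mm.det : ℤ) : ℝ) • y0 = vR (Mm.adjugate.mulVec k0) := by
    have h1 : (mR Mm.adjugate).mulVec ((mR Mm).mulVec y0) = vR (Mm.adjugate.mulVec k0) := by
      rw [hMy, mR_mulVec_vR]
    rw [Matrix.mulVec_mulVec] at h1
    have h2 : mR Mm.adjugate * mR Mm = ((Mm.det : ℤ) : ℝ) • 1 := by
      have h3 : mR (Mm.adjugate * Mm) = mR Mm.adjugate * mR Mm := by
        rw [mR_eq, mR_eq, mR_eq, _root_.map_mul]
      rw [← h3, Matrix.adjugate_mul]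
      have h4 : mR (Mm.det • (1 : Matrix (Fin e) (Fin e) ℤ))
          = Mm.det • mR (1 : Matrix (Fin e) (Fin e) ℤ) := by
        rw [mR_eq, mR_eq]
        exact map_zsmul ((Int.castRingHom ℝ).mapMatrix).toAddMonoidHom _ _
      rw [h4, mR_eq, _root_.map_one, Int.cast_smul_eq_zsmul]
    rw [h2, Matrix.smul_mulVec, Matrix.one_mulVec] at h1
    exact h1
  have hrat : ∀ i : ℕ, ∃ w : Fin e → ℤ,
      ((Mm.det : ℤ) : ℝ) • ((A ^ i).mulVec y0) = vR w := by
    intro i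
    refine ⟨(R2ᵀ ^ i).mulVec (Mm.adjugate.mulVec k0), ?_⟩
    rw [← Matrix.mulVec_smul, hcy]
    have : A ^ i = mR (R2ᵀ ^ i) := by rw [mR_pow, hA, mR_transpose]
    rw [this, mR_mulVec_vR]
  -- reduction of the membership condition
  have hw : ∀ j : ℕ, 1 ≤ j →
      ((mR R2)ᵀ)⁻¹.mulVec ((A ^ j).mulVec y0) = (A ^ (j - 1)).mulVec y0 := by
    intro j hj
    rw [Matrix.mulVec_mulVec]
    congr 1
    have hj' : A ^ j = A * A ^ (j - 1) := by
      conv_lhs => rw [show j = (j - 1) + 1 by omega]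
      rw [pow_succ']
    rw [← hA, hj', ← Matrix.mul_assoc, Matrix.nonsing_inv_mul _ hAdet, Matrix.one_mul]
  have hmem : ∀ x : Fin e → ℤ, x ∈ Gamma R2 y0 m ↔
      ∀ j : ℕ, 1 ≤ j → j ≤ m → ∃ z : ℤ, ip (vR x) ((A ^ (j - 1)).mulVec y0) = (z : ℝ) := by
    intro x
    constructor
    · intro h j h1 h2
      rcases h j h1 h2 with ⟨z, hz⟩
      exact ⟨z, by rwa [hw j h1] at hz⟩
    · intro h j h1 h2
      rcases h j h1 h2 with ⟨z, hz⟩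
      exact ⟨z, by rw [hw j h1]; exact hz⟩
  -- first conjunct
  have hcmem : ∀ x : Fin e → ℤ, Mm.det • x ∈ Gamma R2 y0 m := by
    intro x
    rw [hmem]
    intro j h1 h2
    obtain ⟨w, hwj⟩ := hrat (j - 1)
    have heq : ip (vR (Mm.det • x)) ((A ^ (j - 1)).mulVec y0)
        = ip (vR x) (((Mm.det : ℤ) : ℝ) • ((A ^ (j - 1)).mulVec y0)) := by
      simp only [ip, vR, Pi.smul_apply, smul_eq_mul]
      apply Finset.sum_congr rfl
      intro i _
      push_cast
      ring
    rw [heq, hwj, ip_vR_vR]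
    exact ⟨_, rfl⟩
  -- second conjunct
  have hne_univ : Gamma R2 y0 m ≠ Set.univ := by
    have hy0 : ∃ i, ∀ z : ℤ, y0 i ≠ (z : ℝ) := by
      by_contra h
      push_neg at h
      choose k' hk' using h
      apply hnint m hm le_rfl
      refine ⟨k' + k0, ?_⟩
      rw [hk0]
      funext i
      simp [vR, hk' i]
    obtain ⟨i0, hi0⟩ := hy0
    intro hU
    have hmem0 : Pi.single i0 (1 : ℤ) ∈ Gamma R2 y0 m := by rw [hU]; trivial
    rw [hmem] at hmem0
    obtain ⟨z, hz⟩ := hmem0 1 le_rfl hm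
    have : ip (vR (Pi.single i0 (1 : ℤ))) ((A ^ (1 - 1)).mulVec y0) = y0 i0 := by
      norm_num
      simp [ip, vR, Pi.single_apply]
    rw [this] at hz
    exact hi0 z hz
  -- third conjunct
  have hR2mem : ∀ x ∈ Gamma R2 y0 m, R2.mulVec x ∈ Gamma R2 y0 m := by
    intro x hx
    rw [hmem] at hx ⊢
    intro j h1 h2
    have key : ip (vR (R2.mulVec x)) ((A ^ (j - 1)).mulVec y0)
        = ip (vR x) ((A ^ j).mulVec y0) := by
      rw [← mR_mulVec_vR R2 x, ip_mulVec_left, ← hA, Matrix.mulVec_mulVec]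
      congr 2
      conv_rhs => rw [show j = (j - 1) + 1 by omega]
      rw [pow_succ']
    rw [key]
    rcases Nat.lt_or_ge j m with hlt | hge
    · obtain ⟨z, hz⟩ := hx (j + 1) (by omega) (by omega)
      refine ⟨z, ?_⟩
      simpa using hz
    · have hjm : j = m := le_antisymm h2 hge
      subst hjm
      rw [hk0, ip_add_right]
      obtain ⟨z1, hz1⟩ := hx 1 le_rfl hm
      rw [show (1:ℕ) - 1 = 0 from rfl, pow_zero, Matrix.one_mulVec] at hz1
      refine ⟨z1 + ∑ i, x i * k0 i, ?_⟩
      rw [hz1, ip_vR_vR]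
      push_cast
      ring
  -- the submodule Γ
  let N : Submodule ℤ (Fin e → ℤ) :=
    { carrier := Gamma R2 y0 m
      add_mem' := by
        intro a b ha hb j h1 h2
        obtain ⟨z1, hz1⟩ := ha j h1 h2
        obtain ⟨z2, hz2⟩ := hb j h1 h2
        exact ⟨z1 + z2, by rw [ip_vR_add_left, hz1, hz2]; push_cast; ring⟩
      zero_mem' := by
        intro j h1 h2
        exact ⟨0, by rw [ip_vR_zero_left]; norm_num⟩
      smul_mem' := by
        intro n a ha j h1 h2
        obtain ⟨z, hz⟩ := ha j h1 h2
        exact ⟨n * z, by rw [ip_vR_zsmul_left, hz]; push_cast; ring⟩ }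
  obtain ⟨n, bN⟩ := Submodule.basisOfPid (Pi.basisFun ℤ (Fin e)) N
  haveI : Module.Finite ℤ N := Module.Finite.of_basis bN
  have hrankN : Module.finrank ℤ N = n := by
    rw [Module.finrank_eq_card_basis bN, Fintype.card_fin]
  have hne : n = e := by
    have hle1 : n ≤ e := by
      have := N.finrank_le
      rwa [hrankN, Module.finrank_pi, Fintype.card_fin] at this
    have hle2 : e ≤ n := by
      have hli : LinearIndependent ℤ
          (fun i : Fin e => (⟨Mm.det • Pi.single i 1, hcmem _⟩ : N)) := by
        apply LinearIndependent.of_comp N.subtype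
        have hgi : (N.subtype ∘ fun i : Fin e => (⟨Mm.det • Pi.single i 1, hcmem _⟩ : N))
            = fun i : Fin e => Mm.det • Pi.single i 1 := rfl
        rw [hgi]
        have hbi := (Pi.basisFun ℤ (Fin e)).linearIndependent
        have : (fun i : Fin e => Mm.det • Pi.single i (1:ℤ))
            = (Mm.det • (LinearMap.id : (Fin e → ℤ) →ₗ[ℤ] (Fin e → ℤ)))
              ∘ (Pi.basisFun ℤ (Fin e)) := by
          funext i
          simp [Pi.basisFun_apply]
        rw [this]
        apply hbi.map' _
        rw [LinearMap.ker_eq_bot']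
        intro v hv
        simp only [LinearMap.smul_apply, LinearMap.id_apply] at hv
        rcases smul_eq_zero.mp hv with h | h
        · exact absurd h hc
        · exact h
      have := hli.fintype_card_le_finrank
      rwa [Fintype.card_fin, hrankN] at this
    omega
  let bE : Module.Basis (Fin e) ℤ N := bN.reindex (finCongr hne)
  let Q : Matrix (Fin e) (Fin e) ℤ := Matrix.of fun i j => ((bE j : Fin e → ℤ)) i
  have hQmul : ∀ k : Fin e → ℤ, Q.mulVec k = ∑ j, k j • ((bE j : Fin e → ℤ)) := by
    intro k
    funext i
    simp only [Matrix.mulVec, dotProduct, Q, Matrix.of_apply, Finset.sum_apply,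
      Pi.smul_apply, smul_eq_mul]
    exact Finset.sum_congr rfl fun j _ => mul_comm _ _
  have hGQ : Gamma R2 y0 m = {y | ∃ k : Fin e → ℤ, y = Q.mulVec k} := by
    ext y
    constructor
    · intro hy
      refine ⟨fun j => bE.repr ⟨y, hy⟩ j, ?_⟩
      rw [hQmul]
      have := bE.sum_repr ⟨y, hy⟩
      calc y = ((⟨y, hy⟩ : N) : Fin e → ℤ) := rfl
        _ = ((∑ j, bE.repr ⟨y, hy⟩ j • bE j : N) : Fin e → ℤ) := by rw [this]
        _ = ∑ j, bE.repr ⟨y, hy⟩ j • ((bE j : Fin e → ℤ)) := by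
            simp only [Submodule.coe_sum, Submodule.coe_smul]
    · rintro ⟨k, rfl⟩
      rw [hQmul]
      have : (∑ j, k j • ((bE j : Fin e → ℤ)))
          = ((∑ j, k j • bE j : N) : Fin e → ℤ) := by simp
      rw [this]
      exact (∑ j, k j • bE j : N).2
  -- determinant bound
  have hcol : ∀ i, ∃ k, Mm.det • Pi.single i (1 : ℤ) = Q.mulVec k := by
    intro i
    have := hcmem (Pi.single i 1)
    rw [hGQ] at this
    exact this
  choose ks hks using hcol
  have hQK : Q * Matrix.of (fun a b => ks b a) = Mm.det • 1 := by
    ext a b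
    have := congrFun (hks b) a
    simp only [Matrix.mulVec, dotProduct, Pi.smul_apply, smul_eq_mul,
      Pi.single_apply] at this
    simp only [Matrix.mul_apply, Matrix.of_apply, Matrix.smul_apply, Matrix.one_apply,
      smul_eq_mul]
    rw [← this]
  have hdetQ : Q.det ≠ 0 := by
    intro h
    have := congrArg Matrix.det hQK
    rw [Matrix.det_mul, h, zero_mul, Matrix.det_smul, Matrix.det_one, mul_one] at this
    exact pow_ne_zero _ hc this.symm
  have habs1 : |Q.det| ≠ 1 := by
    intro h
    have hQu : IsUnit Q.det := by
      rcases abs_eq (by norm_num : (0:ℤ) ≤ 1) |>.mp h with h' | h'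
      · exact h' ▸ isUnit_one
      · exact h' ▸ (isUnit_one.neg)
    apply hne_univ
    rw [hGQ]
    ext y
    simp only [Set.mem_setOf_eq, Set.mem_univ, iff_true]
    refine ⟨(Q⁻¹).mulVec y, ?_⟩
    rw [Matrix.mulVec_mulVec, Matrix.mul_nonsing_inv _ hQu, Matrix.one_mulVec]
  have hdet2 : 2 ≤ |Q.det| := by
    have h0 : 0 < |Q.det| := abs_pos.mpr hdetQ
    omega
  -- the matrix Rt
  have hRt : ∀ j : Fin e, ∃ r, R2.mulVec ((bE j : Fin e → ℤ)) = Q.mulVec r := by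
    intro j
    have hmemb : ((bE j : N) : Fin e → ℤ) ∈ Gamma R2 y0 m := (bE j).2
    have := hR2mem _ hmemb
    rw [hGQ] at this
    exact this
  choose rs hrs using hRt
  have hQRt : R2 * Q = Q * Matrix.of (fun a j => rs j a) := by
    ext a j
    have := congrFun (hrs j) a
    simp only [Matrix.mulVec, dotProduct] at this
    simp only [Matrix.mul_apply, Matrix.of_apply, Q]
    rw [this]
    rfl
  exact ⟨⟨Mm.det, hc, hcmem⟩, hne_univ, hR2mem,
    ⟨Q, hGQ, hdet2, ⟨Matrix.of (fun a j => rs j a), hQRt⟩⟩⟩
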